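/- Let γ : [0,∞) → V be a continuous path into a Banach space, and let (t_n)_{n≥0} be a strictly increasing sequence of positive reals with t_n → ∞. Let γ¹ be the path that agrees with γ at each t_n and is linear between consecutive t_n (and constant equal to γ(t_0) on [0, t_0]). Then the squared 2-variation of γ satisfies ‖γ‖²_{2-var,[0,∞)} ≤ 3·(‖γ‖²_{2-var,[0,t_0]} + ‖γ¹‖²_{2-var,[0,∞)} + Σ_{n≥0} ‖γ‖²_{2-var,[t_n,t_{n+1}]}). -/

import Mathlib

open Filter Set ENNReal

noncomputable section

variable {V : Type*} [NormedAddCommGroup V] [NormedSpace ℝ V]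

/-- The `p`-th power of the `p`-variation of `γ` on `[a, b]`: the supremum, over finite
partitions `a = t 0 ≤ t 1 ≤ ⋯ ≤ t m = b`, of `∑ ‖γ(t (i+1)) − γ(t i)‖^p` (in `ℝ≥0∞`). -/
def pVarPow (p : ℝ) (γ : ℝ → V) (a b : ℝ) : ℝ≥0∞ :=
  ⨆ (m : ℕ) (t : ℕ → ℝ) (_ : t 0 = a ∧ t m = b ∧ ∀ i < m, t i ≤ t (i + 1)),
    ENNReal.ofReal (∑ i ∈ Finset.range m, ‖γ (t (i + 1)) - γ (t i)‖ ^ p)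

/-- The `p`-th power of the `p`-variation of `γ` on `[0, ∞)`, as
`lim_{n→∞} ‖γ‖_{p-var,[0,n]}^p = ⨆ n, ‖γ‖_{p-var,[0,n]}^p`. -/
def pVarPowInf (p : ℝ) (γ : ℝ → V) : ℝ≥0∞ := ⨆ n : ℕ, pVarPow p γ 0 n

private lemma sum_range_two_mul (m : ℕ) (g : ℕ → ℝ) :
    ∑ k ∈ Finset.range (2 * m), g k = ∑ i ∈ Finset.range m, (g (2 * i) + g (2 * i + 1)) := by
  induction m with
  | zero => simp
  | succ n ih =>
    have h : 2 * (n + 1) = 2 * n + 1 + 1 := by ring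
    rw [h, Finset.sum_range_succ, Finset.sum_range_succ, ih, Finset.sum_range_succ]
    ring

private lemma chain_le (γ : ℝ → V) (c d : ℝ) (hcd : c ≤ d) (m : ℕ) (r : ℕ → ℝ)
    (hmono : ∀ i < m, r i ≤ r (i + 1)) (hmem : ∀ i ≤ m, r i ∈ Icc c d) :
    ENNReal.ofReal (∑ i ∈ Finset.range m, ‖γ (r (i + 1)) - γ (r i)‖ ^ (2:ℝ)) ≤
      pVarPow 2 γ c d := by
  classical
  set r' : ℕ → ℝ := fun k => if k = 0 then c else if k ≤ m + 1 then r (k - 1) else d with hr'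
  have hr'e : ∀ k, k ≤ m → r' (k + 1) = r k := by
    intro k hk
    simp only [hr', if_neg (Nat.succ_ne_zero k), if_pos (show k + 1 ≤ m + 1 by omega),
      Nat.add_sub_cancel]
  have key : ∑ i ∈ Finset.range m, ‖γ (r (i + 1)) - γ (r i)‖ ^ (2:ℝ) ≤
      ∑ k ∈ Finset.range (m + 2), ‖γ (r' (k + 1)) - γ (r' k)‖ ^ (2:ℝ) := by
    rw [Finset.sum_range_succ, Finset.sum_range_succ']
    have hcongr : ∀ i ∈ Finset.range m, ‖γ (r (i + 1)) - γ (r i)‖ ^ (2:ℝ)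
        = ‖γ (r' (i + 1 + 1)) - γ (r' (i + 1))‖ ^ (2:ℝ) := by
      intro i hi; simp only [Finset.mem_range] at hi
      rw [hr'e i (by omega), hr'e (i + 1) (by omega)]
    rw [Finset.sum_congr rfl hcongr]
    have h0 : 0 ≤ ‖γ (r' (0 + 1)) - γ (r' 0)‖ ^ (2:ℝ) := Real.rpow_nonneg (norm_nonneg _) _
    have hm : 0 ≤ ‖γ (r' (m + 1 + 1)) - γ (r' (m + 1))‖ ^ (2:ℝ) := Real.rpow_nonneg (norm_nonneg _) _
    linarith
  refine le_trans (ENNReal.ofReal_le_ofReal key) ?_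
  rw [pVarPow]
  refine le_iSup_of_le (m + 2) (le_iSup_of_le r' (le_iSup_of_le ⟨?_, ?_, ?_⟩ le_rfl))
  · simp [hr']
  · simp only [hr']; rw [if_neg (by omega), if_neg (by omega)]
  · intro k hk
    rcases Nat.eq_zero_or_pos k with h0 | h0
    · subst h0
      have e1 : r' 0 = c := by simp [hr']
      rw [e1, hr'e 0 (Nat.zero_le _)]
      exact (hmem 0 (Nat.zero_le _)).1
    · rcases Nat.lt_or_ge k (m + 1) with h1 | h1
      · obtain ⟨j, rfl⟩ : ∃ j, k = j + 1 := ⟨k - 1, by omega⟩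
        rw [hr'e j (by omega), hr'e (j + 1) (by omega)]
        exact hmono j (by omega)
      · have hk1 : k = m + 1 := by omega
        subst hk1
        have e2 : r' (m + 1 + 1) = d := by
          simp only [hr']; rw [if_neg (by omega), if_neg (by omega)]
        rw [e2, hr'e m le_rfl]
        exact (hmem m le_rfl).2

/-- If `γ¹` agrees with the continuous path `γ` at a strictly increasing
sequence of positive times `t n → ∞`, is linear between consecutive `t n` and constant
`γ(t 0)` on `[0, t 0]`, then
`‖γ‖²_{2-var,[0,∞)} ≤ 3(‖γ‖²_{2-var,[0,t 0]} + ‖γ¹‖²_{2-var,[0,∞)} + ∑ₙ ‖γ‖²_{2-var,[tₙ,tₙ₊₁]})`. -/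
theorem stmt3 (γ γ₁ : ℝ → V) (hγ : Continuous γ)
    (t : ℕ → ℝ) (ht0 : 0 < t 0) (hmono : StrictMono t)
    (htend : Tendsto t atTop atTop)
    (hγ₁a : ∀ s ∈ Icc (0 : ℝ) (t 0), γ₁ s = γ (t 0))
    (hγ₁b : ∀ n : ℕ, ∀ s ∈ Icc (t n) (t (n + 1)),
      γ₁ s = γ (t n) + ((s - t n) / (t (n + 1) - t n)) • (γ (t (n + 1)) - γ (t n))) :
    pVarPowInf 2 γ ≤
      3 * (pVarPow 2 γ 0 (t 0) + pVarPowInf 2 γ₁ +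
        ∑' n : ℕ, pVarPow 2 γ (t n) (t (n + 1))) := by
  classical
  have p2 : ∀ y : ℝ, y ^ (2:ℝ) = y ^ (2:ℕ) := fun y => Real.rpow_two y
  have htm : Monotone t := hmono.monotone
  have ht0' : (0:ℝ) ≤ t 0 := ht0.le
  -- γ₁ agrees with γ at grid points
  have hgrid : ∀ n, γ₁ (t n) = γ (t n) := by
    intro n
    cases n with
    | zero => exact hγ₁a (t 0) ⟨ht0', le_rfl⟩
    | succ k =>
      rw [hγ₁b k (t (k + 1)) ⟨(hmono (lt_add_one k)).le, le_rfl⟩,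
        div_self (sub_ne_zero.2 (hmono (lt_add_one k)).ne'), one_smul]
      abel
  rw [pVarPowInf]
  refine iSup_le fun N => ?_
  rw [pVarPow]
  refine iSup_le fun m => iSup_le fun s => iSup_le fun hs => ?_
  obtain ⟨hs0, hsm, hstep⟩ := hs
  have hsmono : ∀ i j, i ≤ j → j ≤ m → s i ≤ s j := by
    intro i j hij hjm
    induction j with
    | zero =>
      have : i = 0 := by omega
      simp [this]
    | succ n ih =>
      rcases Nat.lt_or_ge i (n + 1) with h | h
      · exact (ih (by omega) (by omega)).trans (hstep n (by omega))
      · have : i = n + 1 := by omega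
        simp [this]
  obtain ⟨K, hK⟩ : ∃ K, (N : ℝ) ≤ t K := (htend.eventually_ge_atTop (N : ℝ)).exists
  have hs_lb : ∀ i ≤ m, 0 ≤ s i := by
    intro i hi
    have h := hsmono 0 i (Nat.zero_le _) hi
    rw [hs0] at h; exact h
  have hs_ub : ∀ i ≤ m, s i ≤ t K := by
    intro i hi
    have h := hsmono i m hi le_rfl
    rw [hsm] at h; exact h.trans hK
  -- cell machinery
  set e : ℝ → ℕ := fun x => if x ≤ t 0 then 0 else Nat.findGreatest (fun n => t n ≤ x) K + 1
    with he
  set L : ℕ → ℝ := fun j => if j = 0 then 0 else t (j - 1) with hL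
  set c : ℕ → ℝ → ℝ := fun j x => max (L j) (min x (t j)) with hc
  have hLR : ∀ j, L j ≤ t j := by
    intro j
    cases j with
    | zero => simpa [hL] using ht0'
    | succ n =>
      simp only [hL]
      rw [if_neg (Nat.succ_ne_zero n)]
      exact htm (by omega)
  have hf1 : ∀ x, 0 ≤ x → L (e x) ≤ x := by
    intro x hx
    by_cases h : x ≤ t 0
    · simp [he, hL, h, hx]
    · simp only [he, hL, if_neg h]
      rw [if_neg (Nat.succ_ne_zero _)]
      simpa using Nat.findGreatest_spec (P := fun n => t n ≤ x) (Nat.zero_le K) (le_of_not_ge h)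
  have hf2 : ∀ x, x ≤ t K → x ≤ t (e x) := by
    intro x hx
    by_cases h : x ≤ t 0
    · simpa [he, h] using h
    · simp only [he, if_neg h]
      rcases eq_or_lt_of_le (Nat.findGreatest_le (P := fun n => t n ≤ x) K) with hE | hE
      · rw [hE]; exact hx.trans (htm (by omega))
      · by_contra hcon
        exact Nat.findGreatest_is_greatest (lt_add_one _) hE (le_of_not_ge hcon)
  have hf3 : ∀ x, e x ≤ K + 1 := by
    intro x
    by_cases h : x ≤ t 0
    · simp [he, h]
    · simp only [he, if_neg h]
      exact Nat.succ_le_succ (Nat.findGreatest_le K)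
  have hf4 : ∀ x y, x ≤ y → e x ≤ e y := by
    intro x y hxy
    by_cases hy : y ≤ t 0
    · have hx : x ≤ t 0 := hxy.trans hy
      simp [he, hx, hy]
    · by_cases hx : x ≤ t 0
      · simp [he, hx, hy]
      · simp only [he, if_neg hx, if_neg hy]
        exact Nat.succ_le_succ (Nat.findGreatest_mono (fun n hn => hn.trans hxy) le_rfl)
  have hf5 : ∀ x j, j < e x → t j ≤ x := by
    intro x j hj
    by_cases h : x ≤ t 0
    · simp [he, h] at hj
    · simp only [he, if_neg h] at hj
      have hj' : j ≤ Nat.findGreatest (fun n => t n ≤ x) K := by omega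
      exact (htm hj').trans
        (Nat.findGreatest_spec (P := fun n => t n ≤ x) (Nat.zero_le K) (le_of_not_ge h))
  have hcmem : ∀ j x, c j x ∈ Icc (L j) (t j) :=
    fun j x => ⟨le_max_left _ _, max_le (hLR j) (min_le_right _ _)⟩
  have hcmono : ∀ j x y, x ≤ y → c j x ≤ c j y :=
    fun j x y h => max_le_max le_rfl (min_le_min h le_rfl)
  have hcid : ∀ j x, L j ≤ x → x ≤ t j → c j x = x := by
    intro j x h1 h2
    rw [hc]; dsimp only
    rw [min_eq_left h2, max_eq_right h1]
  -- the grid-increment endpoints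
  set u : ℕ → ℝ := fun i => t (e (s i)) with hu
  set v : ℕ → ℝ := fun i => if e (s i) = e (s (i + 1)) then u i else t (e (s (i + 1)) - 1)
    with hv
  -- per-increment bound
  have key : ∀ i < m, ENNReal.ofReal (‖γ (s (i + 1)) - γ (s i)‖ ^ (2:ℝ)) ≤
      3 * ((∑ j ∈ Finset.range (K + 2),
          ENNReal.ofReal (‖γ (c j (s (i + 1))) - γ (c j (s i))‖ ^ (2:ℝ))) +
        ENNReal.ofReal (‖γ₁ (v i) - γ₁ (u i)‖ ^ (2:ℝ))) := by
    intro i hi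
    have hab : s i ≤ s (i + 1) := hstep i hi
    have ha0 : 0 ≤ s i := hs_lb i hi.le
    have hb0 : 0 ≤ s (i + 1) := hs_lb _ hi
    have haK : s i ≤ t K := hs_ub i hi.le
    have hbK : s (i + 1) ≤ t K := hs_ub _ hi
    have hca : c (e (s i)) (s i) = s i := hcid _ _ (hf1 _ ha0) (hf2 _ haK)
    have hcb : c (e (s (i + 1))) (s (i + 1)) = s (i + 1) := hcid _ _ (hf1 _ hb0) (hf2 _ hbK)
    rcases eq_or_lt_of_le (hf4 _ _ hab) with hj | hj
    · -- same cell
      have hcb' : c (e (s i)) (s (i + 1)) = s (i + 1) := by rw [hj]; exact hcb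
      calc ENNReal.ofReal (‖γ (s (i + 1)) - γ (s i)‖ ^ (2:ℝ))
          = ENNReal.ofReal (‖γ (c (e (s i)) (s (i + 1))) - γ (c (e (s i)) (s i))‖ ^ (2:ℝ)) := by
            rw [hca, hcb']
        _ ≤ ∑ j ∈ Finset.range (K + 2),
              ENNReal.ofReal (‖γ (c j (s (i + 1))) - γ (c j (s i))‖ ^ (2:ℝ)) := by
            refine Finset.single_le_sum
              (f := fun j => ENNReal.ofReal (‖γ (c j (s (i + 1))) - γ (c j (s i))‖ ^ (2:ℝ)))
              (fun j _ => zero_le) ?_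
            exact Finset.mem_range.2 (by have := hf3 (s i); omega)
        _ ≤ (∑ j ∈ Finset.range (K + 2),
              ENNReal.ofReal (‖γ (c j (s (i + 1))) - γ (c j (s i))‖ ^ (2:ℝ))) +
            ENNReal.ofReal (‖γ₁ (v i) - γ₁ (u i)‖ ^ (2:ℝ)) := le_self_add
        _ ≤ 3 * ((∑ j ∈ Finset.range (K + 2),
              ENNReal.ofReal (‖γ (c j (s (i + 1))) - γ (c j (s i))‖ ^ (2:ℝ))) +
            ENNReal.ofReal (‖γ₁ (v i) - γ₁ (u i)‖ ^ (2:ℝ))) :=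
          le_mul_of_one_le_left' (by norm_num)
    · -- crossing
      set j₁ := e (s i) with hj₁
      set j₂ := e (s (i + 1)) with hj₂
      have hone : 1 ≤ j₂ := by omega
      have hR1 : t j₁ ≤ s (i + 1) := hf5 _ _ hj
      have hL2 : s i ≤ t (j₂ - 1) := (hf2 _ haK).trans (htm (by omega))
      have hLj₂ : L j₂ = t (j₂ - 1) := by
        simp only [hL]; rw [if_neg (by omega)]
      have hc2 : c j₁ (s (i + 1)) = t j₁ := by
        rw [hc]; dsimp only
        rw [min_eq_right hR1, max_eq_right (hLR j₁)]
      have hc3 : c j₂ (s i) = t (j₂ - 1) := by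
        rw [hc]; dsimp only
        rw [min_eq_left (hL2.trans (htm (by omega))), hLj₂, max_eq_left hL2]
      have hv' : v i = t (j₂ - 1) := if_neg hj.ne
      have hu' : u i = t j₁ := rfl
      have hdecomp : γ (s (i + 1)) - γ (s i) =
          (γ (t j₁) - γ (s i)) + (γ (t (j₂ - 1)) - γ (t j₁)) +
            (γ (s (i + 1)) - γ (t (j₂ - 1))) := by abel
      have hreal : ‖γ (s (i + 1)) - γ (s i)‖ ^ (2:ℝ) ≤
          3 * (‖γ (t j₁) - γ (s i)‖ ^ (2:ℝ) + ‖γ (t (j₂ - 1)) - γ (t j₁)‖ ^ (2:ℝ) +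
            ‖γ (s (i + 1)) - γ (t (j₂ - 1))‖ ^ (2:ℝ)) := by
        have htri : ‖γ (s (i + 1)) - γ (s i)‖ ≤ ‖γ (t j₁) - γ (s i)‖ +
            ‖γ (t (j₂ - 1)) - γ (t j₁)‖ + ‖γ (s (i + 1)) - γ (t (j₂ - 1))‖ := by
          rw [hdecomp]; exact norm_add₃_le
        simp only [p2]
        nlinarith [norm_nonneg (γ (s (i + 1)) - γ (s i)),
          norm_nonneg (γ (t j₁) - γ (s i)), norm_nonneg (γ (t (j₂ - 1)) - γ (t j₁)),
          norm_nonneg (γ (s (i + 1)) - γ (t (j₂ - 1))),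
          sq_nonneg (‖γ (t j₁) - γ (s i)‖ - ‖γ (t (j₂ - 1)) - γ (t j₁)‖),
          sq_nonneg (‖γ (t (j₂ - 1)) - γ (t j₁)‖ - ‖γ (s (i + 1)) - γ (t (j₂ - 1))‖),
          sq_nonneg (‖γ (t j₁) - γ (s i)‖ - ‖γ (s (i + 1)) - γ (t (j₂ - 1))‖), htri]
      have hnn : ∀ y : V, 0 ≤ ‖y‖ ^ (2:ℝ) := fun y => Real.rpow_nonneg (norm_nonneg _) _
      calc ENNReal.ofReal (‖γ (s (i + 1)) - γ (s i)‖ ^ (2:ℝ))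
          ≤ ENNReal.ofReal (3 * (‖γ (t j₁) - γ (s i)‖ ^ (2:ℝ) +
              ‖γ (t (j₂ - 1)) - γ (t j₁)‖ ^ (2:ℝ) +
              ‖γ (s (i + 1)) - γ (t (j₂ - 1))‖ ^ (2:ℝ))) := ENNReal.ofReal_le_ofReal hreal
        _ = 3 * (ENNReal.ofReal (‖γ (t j₁) - γ (s i)‖ ^ (2:ℝ)) +
              ENNReal.ofReal (‖γ (t (j₂ - 1)) - γ (t j₁)‖ ^ (2:ℝ)) +
              ENNReal.ofReal (‖γ (s (i + 1)) - γ (t (j₂ - 1))‖ ^ (2:ℝ))) := by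
            rw [ENNReal.ofReal_mul (by norm_num), ENNReal.ofReal_add (by positivity) (hnn _),
              ENNReal.ofReal_add (hnn _) (hnn _), ENNReal.ofReal_ofNat]
        _ ≤ 3 * ((∑ j ∈ Finset.range (K + 2),
              ENNReal.ofReal (‖γ (c j (s (i + 1))) - γ (c j (s i))‖ ^ (2:ℝ))) +
            ENNReal.ofReal (‖γ₁ (v i) - γ₁ (u i)‖ ^ (2:ℝ))) := by
            refine mul_le_mul_right ?_ 3
            have hy : ENNReal.ofReal (‖γ (t (j₂ - 1)) - γ (t j₁)‖ ^ (2:ℝ)) =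
                ENNReal.ofReal (‖γ₁ (v i) - γ₁ (u i)‖ ^ (2:ℝ)) := by
              rw [hu', hv', hgrid, hgrid]
            have hxz : ENNReal.ofReal (‖γ (t j₁) - γ (s i)‖ ^ (2:ℝ)) +
                ENNReal.ofReal (‖γ (s (i + 1)) - γ (t (j₂ - 1))‖ ^ (2:ℝ)) ≤
                ∑ j ∈ Finset.range (K + 2),
                  ENNReal.ofReal (‖γ (c j (s (i + 1))) - γ (c j (s i))‖ ^ (2:ℝ)) := by
              have hsub : ({j₁, j₂} : Finset ℕ) ⊆ Finset.range (K + 2) := by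
                intro x hx
                simp only [Finset.mem_insert, Finset.mem_singleton] at hx
                have h3 := hf3 (s i)
                have h4 := hf3 (s (i + 1))
                rcases hx with rfl | rfl <;> exact Finset.mem_range.2 (by omega)
              calc ENNReal.ofReal (‖γ (t j₁) - γ (s i)‖ ^ (2:ℝ)) +
                  ENNReal.ofReal (‖γ (s (i + 1)) - γ (t (j₂ - 1))‖ ^ (2:ℝ))
                  = ∑ j ∈ ({j₁, j₂} : Finset ℕ),
                      ENNReal.ofReal (‖γ (c j (s (i + 1))) - γ (c j (s i))‖ ^ (2:ℝ)) := by
                    rw [Finset.sum_pair hj.ne, hca, hc2, hc3, hcb]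
                _ ≤ _ := Finset.sum_le_sum_of_subset hsub
            calc ENNReal.ofReal (‖γ (t j₁) - γ (s i)‖ ^ (2:ℝ)) +
                ENNReal.ofReal (‖γ (t (j₂ - 1)) - γ (t j₁)‖ ^ (2:ℝ)) +
                ENNReal.ofReal (‖γ (s (i + 1)) - γ (t (j₂ - 1))‖ ^ (2:ℝ))
                = (ENNReal.ofReal (‖γ (t j₁) - γ (s i)‖ ^ (2:ℝ)) +
                  ENNReal.ofReal (‖γ (s (i + 1)) - γ (t (j₂ - 1))‖ ^ (2:ℝ))) +
                  ENNReal.ofReal (‖γ (t (j₂ - 1)) - γ (t j₁)‖ ^ (2:ℝ)) := by ring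
              _ ≤ _ := add_le_add hxz (le_of_eq hy)
  -- assemble everything
  obtain ⟨M, hM⟩ := exists_nat_ge (t (K + 1))
  set w : ℕ → ℝ := fun k => if k % 2 = 0 then u (k / 2) else v (k / 2) with hw
  have hweven : ∀ i, w (2 * i) = u i := by
    intro i
    have h1 : (2 * i) % 2 = 0 := by omega
    have h2 : (2 * i) / 2 = i := by omega
    simp [hw, h1, h2]
  have hwodd : ∀ i, w (2 * i + 1) = v i := by
    intro i
    have h1 : (2 * i + 1) % 2 = 1 := by omega
    have h2 : (2 * i + 1) / 2 = i := by omega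
    simp [hw, h1, h2]
  have huv : ∀ i < m, u i ≤ v i := by
    intro i hi
    by_cases h : e (s i) = e (s (i + 1))
    · simp [hv, h]
    · rw [hv]; dsimp only; rw [if_neg h]
      have h4 := hf4 _ _ (hstep i hi)
      exact htm (by omega)
  have hvu : ∀ i, v i ≤ u (i + 1) := by
    intro i
    by_cases h : e (s i) = e (s (i + 1))
    · simp [hv, hu, h]
    · rw [hv, hu]; dsimp only; rw [if_neg h]
      exact htm (by omega)
  have hwmono : ∀ k < 2 * m, w k ≤ w (k + 1) := by
    intro k hk
    rcases Nat.even_or_odd k with ⟨i, rfl⟩ | ⟨i, rfl⟩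
    · rw [← two_mul, hweven, hwodd]
      exact huv i (by omega)
    · rw [show 2 * i + 1 + 1 = 2 * (i + 1) by ring, hwodd, hweven]
      exact hvu i
  have htn : ∀ n ≤ K + 1, t n ∈ Icc (0:ℝ) (M:ℝ) := fun n hn =>
    ⟨ht0'.trans (htm (Nat.zero_le n)), (htm hn).trans hM⟩
  have hwmem : ∀ k ≤ 2 * m, w k ∈ Icc (0:ℝ) (M:ℝ) := by
    intro k _
    rcases Nat.even_or_odd k with ⟨i, rfl⟩ | ⟨i, rfl⟩
    · rw [← two_mul, hweven, hu]
      exact htn _ (hf3 _)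
    · rw [hwodd]
      by_cases h : e (s i) = e (s (i + 1))
      · rw [hv]; dsimp only; rw [if_pos h, hu]
        exact htn _ (hf3 _)
      · rw [hv]; dsimp only; rw [if_neg h]
        exact htn _ (by have := hf3 (s (i + 1)); omega)
  have hGsum : ∑ i ∈ Finset.range m, ENNReal.ofReal (‖γ₁ (v i) - γ₁ (u i)‖ ^ (2:ℝ)) ≤
      pVarPowInf 2 γ₁ := by
    have h1 : ∑ i ∈ Finset.range m, ‖γ₁ (v i) - γ₁ (u i)‖ ^ (2:ℝ) ≤
        ∑ k ∈ Finset.range (2 * m), ‖γ₁ (w (k + 1)) - γ₁ (w k)‖ ^ (2:ℝ) := by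
      rw [sum_range_two_mul]
      refine Finset.sum_le_sum fun i _ => ?_
      rw [hweven i, hwodd i]
      exact le_add_of_nonneg_right (Real.rpow_nonneg (norm_nonneg _) _)
    calc ∑ i ∈ Finset.range m, ENNReal.ofReal (‖γ₁ (v i) - γ₁ (u i)‖ ^ (2:ℝ))
        = ENNReal.ofReal (∑ i ∈ Finset.range m, ‖γ₁ (v i) - γ₁ (u i)‖ ^ (2:ℝ)) :=
          (ENNReal.ofReal_sum_of_nonneg fun i _ => Real.rpow_nonneg (norm_nonneg _) _).symm
      _ ≤ ENNReal.ofReal (∑ k ∈ Finset.range (2 * m), ‖γ₁ (w (k + 1)) - γ₁ (w k)‖ ^ (2:ℝ)) :=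
          ENNReal.ofReal_le_ofReal h1
      _ ≤ pVarPow 2 γ₁ 0 (M:ℝ) :=
          chain_le γ₁ 0 (M:ℝ) (Nat.cast_nonneg M) (2 * m) w hwmono hwmem
      _ ≤ pVarPowInf 2 γ₁ := by
          rw [pVarPowInf]; exact le_iSup (fun n : ℕ => pVarPow 2 γ₁ 0 (n:ℝ)) M
  have hcells : ∀ j,
      ∑ i ∈ Finset.range m, ENNReal.ofReal (‖γ (c j (s (i + 1))) - γ (c j (s i))‖ ^ (2:ℝ)) ≤
        pVarPow 2 γ (L j) (t j) := by
    intro j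
    calc ∑ i ∈ Finset.range m, ENNReal.ofReal (‖γ (c j (s (i + 1))) - γ (c j (s i))‖ ^ (2:ℝ))
        = ENNReal.ofReal (∑ i ∈ Finset.range m, ‖γ (c j (s (i + 1))) - γ (c j (s i))‖ ^ (2:ℝ)) :=
          (ENNReal.ofReal_sum_of_nonneg fun i _ => Real.rpow_nonneg (norm_nonneg _) _).symm
      _ ≤ pVarPow 2 γ (L j) (t j) :=
          chain_le γ (L j) (t j) (hLR j) m (fun i => c j (s i))
            (fun i hi => hcmono j _ _ (hstep i hi)) (fun i _ => hcmem j (s i))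
  have hcellsum : ∑ j ∈ Finset.range (K + 2),
      ∑ i ∈ Finset.range m, ENNReal.ofReal (‖γ (c j (s (i + 1))) - γ (c j (s i))‖ ^ (2:ℝ)) ≤
      pVarPow 2 γ 0 (t 0) + ∑' n : ℕ, pVarPow 2 γ (t n) (t (n + 1)) := by
    rw [Finset.sum_range_succ']
    have hA : (∑ i ∈ Finset.range m,
        ENNReal.ofReal (‖γ (c 0 (s (i + 1))) - γ (c 0 (s i))‖ ^ (2:ℝ))) ≤
        pVarPow 2 γ 0 (t 0) := by
      have h := hcells 0
      have hL0 : L 0 = 0 := by simp [hL]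
      rwa [hL0] at h
    have hB : ∑ j ∈ Finset.range (K + 1), (∑ i ∈ Finset.range m,
        ENNReal.ofReal (‖γ (c (j + 1) (s (i + 1))) - γ (c (j + 1) (s i))‖ ^ (2:ℝ))) ≤
        ∑' n : ℕ, pVarPow 2 γ (t n) (t (n + 1)) := by
      refine le_trans (Finset.sum_le_sum fun n _ => ?_) (ENNReal.sum_le_tsum _)
      have h := hcells (n + 1)
      have hLn : L (n + 1) = t n := by
        simp only [hL, if_neg (Nat.succ_ne_zero n), Nat.add_sub_cancel]
      rwa [hLn] at h
    calc ∑ j ∈ Finset.range (K + 1), (∑ i ∈ Finset.range m,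
          ENNReal.ofReal (‖γ (c (j + 1) (s (i + 1))) - γ (c (j + 1) (s i))‖ ^ (2:ℝ))) +
        ∑ i ∈ Finset.range m,
          ENNReal.ofReal (‖γ (c 0 (s (i + 1))) - γ (c 0 (s i))‖ ^ (2:ℝ))
        ≤ (∑' n : ℕ, pVarPow 2 γ (t n) (t (n + 1))) + pVarPow 2 γ 0 (t 0) := add_le_add hB hA
      _ = _ := add_comm _ _
  calc ENNReal.ofReal (∑ i ∈ Finset.range m, ‖γ (s (i + 1)) - γ (s i)‖ ^ (2:ℝ))
      = ∑ i ∈ Finset.range m, ENNReal.ofReal (‖γ (s (i + 1)) - γ (s i)‖ ^ (2:ℝ)) :=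
        ENNReal.ofReal_sum_of_nonneg fun i _ => Real.rpow_nonneg (norm_nonneg _) _
    _ ≤ ∑ i ∈ Finset.range m, 3 * ((∑ j ∈ Finset.range (K + 2),
          ENNReal.ofReal (‖γ (c j (s (i + 1))) - γ (c j (s i))‖ ^ (2:ℝ))) +
        ENNReal.ofReal (‖γ₁ (v i) - γ₁ (u i)‖ ^ (2:ℝ))) :=
        Finset.sum_le_sum fun i hi => key i (Finset.mem_range.1 hi)
    _ = 3 * ((∑ j ∈ Finset.range (K + 2), ∑ i ∈ Finset.range m,
          ENNReal.ofReal (‖γ (c j (s (i + 1))) - γ (c j (s i))‖ ^ (2:ℝ))) +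
        ∑ i ∈ Finset.range m, ENNReal.ofReal (‖γ₁ (v i) - γ₁ (u i)‖ ^ (2:ℝ))) := by
        rw [← Finset.mul_sum, Finset.sum_add_distrib, Finset.sum_comm]
    _ ≤ 3 * ((pVarPow 2 γ 0 (t 0) + ∑' n : ℕ, pVarPow 2 γ (t n) (t (n + 1))) +
        pVarPowInf 2 γ₁) := mul_le_mul_right (add_le_add hcellsum hGsum) 3
    _ = 3 * (pVarPow 2 γ 0 (t 0) + pVarPowInf 2 γ₁ +
        ∑' n : ℕ, pVarPow 2 γ (t n) (t (n + 1))) := by ring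


end
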